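/- Let L₁, L₂, σ² > 0 and γ₁, γ₂ ∈ (0,1) with γ₁ + γ₂ = 1. Then ∫_0^∞ ∫_0^∞ (1/4) e^{-x₁/2} e^{-x₂/2} · min{ log₂(1 + γ₁L₁x₁/(γ₂L₁x₁ + 2σ²)), log₂(1 + γ₁L₂x₂/(γ₂L₂x₂ + 2σ²)) } dx₁ dx₂ ≤ min{ C₁(L₁/σ²) − C₁(γ₂L₁/σ²), C₁(L₂/σ²) − C₁(γ₂L₂/σ²) }. (This is the upper bound on the ergodic rate of the weak user's message in conventional NOMA.) -/

import Mathlib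

open Real MeasureTheory Set
open Filter

lemma expint' (b : ℝ) (hb : 0 < b) (a : ℝ) :
    IntegrableOn (fun x => Real.exp (-x/b)) (Ioi a) := by
  have h := exp_neg_integrableOn_Ioi a (inv_pos.2 hb)
  refine h.congr_fun (fun x _ => congrArg Real.exp (by field_simp)) measurableSet_Ioi

lemma log_le_lin {a x : ℝ} (ha : 0 < a) (hx : 0 ≤ x) : Real.log (1 + a*x) ≤ a*x := by
  have := Real.log_le_sub_one_of_pos (show (0:ℝ) < 1 + a*x by positivity)
  linarith

lemma log_nonneg' {a x : ℝ} (ha : 0 < a) (hx : 0 ≤ x) : 0 ≤ Real.log (1 + a*x) :=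
  Real.log_nonneg (by nlinarith)

lemma xexp_bound {x : ℝ} (hx : 0 ≤ x) : x * Real.exp (-x/2) ≤ 4 * Real.exp (-x/4) := by
  have h1 : x/4 + 1 ≤ Real.exp (x/4) := Real.add_one_le_exp _
  have h2 : x ≤ 4 * Real.exp (x/4) := by nlinarith [Real.exp_pos (x/4)]
  have h3 : Real.exp (-x/2) = Real.exp (-x/4) * Real.exp (-(x/4)) := by
    rw [← Real.exp_add]; congr 1; ring
  have h4 : x * Real.exp (-(x/4)) ≤ 4 := by
    calc x * Real.exp (-(x/4)) ≤ (4 * Real.exp (x/4)) * Real.exp (-(x/4)) := by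
          apply mul_le_mul_of_nonneg_right h2 (Real.exp_pos _).le
      _ = 4 := by rw [mul_assoc, ← Real.exp_add]; simp
  calc x * Real.exp (-x/2) = (x * Real.exp (-(x/4))) * Real.exp (-x/4) := by rw [h3]; ring
    _ ≤ 4 * Real.exp (-x/4) := mul_le_mul_of_nonneg_right h4 (Real.exp_pos _).le

lemma meas_explog (a : ℝ) : Measurable (fun x => Real.exp (-x/2) * Real.log (1 + a*x)) := by
  apply Measurable.mul
  · exact Real.measurable_exp.comp (by fun_prop)
  · exact Real.measurable_log.comp (by fun_prop)

lemma intOn_explog {a : ℝ} (ha : 0 < a) :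
    IntegrableOn (fun x => Real.exp (-x/2) * Real.log (1 + a*x)) (Ioi 0) := by
  apply Integrable.mono' (g := fun x => (4*a) * Real.exp (-x/4))
  · exact ((expint' 4 (by norm_num) 0).const_mul _)
  · exact (meas_explog a).aestronglyMeasurable
  · filter_upwards [ae_restrict_mem measurableSet_Ioi] with x hx
    have hx0 : (0:ℝ) ≤ x := (le_of_lt hx)
    rw [Real.norm_eq_abs, abs_of_nonneg (mul_nonneg (Real.exp_pos _).le (log_nonneg' ha hx0))]
    calc Real.exp (-x/2) * Real.log (1 + a*x) ≤ Real.exp (-x/2) * (a*x) :=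
          mul_le_mul_of_nonneg_left (log_le_lin ha hx0) (Real.exp_pos _).le
      _ = a * (x * Real.exp (-x/2)) := by ring
      _ ≤ a * (4 * Real.exp (-x/4)) := mul_le_mul_of_nonneg_left (xexp_bound hx0) ha.le
      _ = (4*a) * Real.exp (-x/4) := by ring

lemma intOn_frac {a : ℝ} (ha : 0 < a) :
    IntegrableOn (fun x => a * Real.exp (-x/2) / (1 + a*x)) (Ioi 0) := by
  apply Integrable.mono' (g := fun x => a * Real.exp (-x/2))
  · exact ((expint' 2 (by norm_num) 0).const_mul _)
  · apply Measurable.aestronglyMeasurable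
    apply Measurable.div
    · exact (Real.measurable_exp.comp (by fun_prop)).const_mul a
    · fun_prop
  · filter_upwards [ae_restrict_mem measurableSet_Ioi] with x hx
    have hx0 : (0:ℝ) ≤ x := le_of_lt hx
    have hden : (1:ℝ) ≤ 1 + a*x := by nlinarith
    rw [Real.norm_eq_abs, abs_of_nonneg (by positivity)]
    rw [div_le_iff₀ (by linarith)]
    nlinarith [mul_nonneg (mul_nonneg ha.le (Real.exp_pos (-x/2)).le) (by nlinarith : (0:ℝ) ≤ a*x)]

lemma intOn_tail {c : ℝ} (hc : 0 < c) :
    IntegrableOn (fun t => t⁻¹ * Real.exp (-t/c)) (Ioi 1) := by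
  apply Integrable.mono' (g := fun t => Real.exp (-t/c))
  · exact expint' c hc 1
  · exact (measurable_inv.mul (Real.measurable_exp.comp (by fun_prop))).aestronglyMeasurable
  · filter_upwards [ae_restrict_mem measurableSet_Ioi] with t ht
    have ht1 : (1:ℝ) < t := ht
    rw [Real.norm_eq_abs, abs_of_nonneg (by positivity)]
    calc t⁻¹ * Real.exp (-t/c) ≤ 1 * Real.exp (-t/c) := by
          apply mul_le_mul_of_nonneg_right _ (Real.exp_pos _).le
          rw [inv_le_one_iff₀]; right; linarith
      _ = Real.exp (-t/c) := one_mul _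

lemma hd2 (x : ℝ) : HasDerivAt (fun x : ℝ => -x/2) (-(1/2)) x := by
  have := ((hasDerivAt_neg x).div_const 2)
  exact this.congr_deriv (by norm_num)

lemma tend2 : Tendsto (fun x : ℝ => -x/2) atTop atBot := by
  have h : Tendsto (fun x : ℝ => -x) atTop atBot := tendsto_neg_atTop_atBot
  exact h.atBot_div_const two_pos

lemma intexp : ∫ x in Ioi (0:ℝ), Real.exp (-x/2) = 2 := by
  have hd : ∀ x ∈ Ioi (0:ℝ), HasDerivAt (fun x => -2 * Real.exp (-x/2)) (Real.exp (-x/2)) x := by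
    intro x _
    have := ((hd2 x).exp.const_mul (-2))
    exact this.congr_deriv (by ring)
  have hcont : ContinuousWithinAt (fun x : ℝ => -2 * Real.exp (-x/2)) (Ici 0) 0 :=
    (Continuous.continuousAt (by continuity)).continuousWithinAt
  have htend : Tendsto (fun x : ℝ => -2 * Real.exp (-x/2)) atTop (nhds 0) := by
    simpa using (Real.tendsto_exp_atBot.comp tend2).const_mul (-2)
  have := integral_Ioi_of_hasDerivAt_of_tendsto hcont hd (expint' 2 (by norm_num) 0) htend
  norm_num at this
  linarith [this]

lemma ftc_eq {a : ℝ} (ha : 0 < a) :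
    ∫ x in Ioi (0:ℝ), (1/2) * (Real.exp (-x/2) * Real.log (1 + a*x))
      = ∫ x in Ioi (0:ℝ), a * Real.exp (-x/2) / (1 + a*x) := by
  set f : ℝ → ℝ := fun x => -(Real.exp (-x/2) * Real.log (1 + a*x)) with hf
  set f' : ℝ → ℝ := fun x =>
    (1/2) * (Real.exp (-x/2) * Real.log (1 + a*x)) - a * Real.exp (-x/2) / (1 + a*x) with hf'
  have hpos : ∀ x : ℝ, 0 < x → (0:ℝ) < 1 + a*x := fun x hx => by nlinarith
  have hderiv : ∀ x ∈ Ioi (0:ℝ), HasDerivAt f (f' x) x := by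
    intro x hx
    have hin : HasDerivAt (fun x : ℝ => 1 + a*x) a x := by
      simpa using ((hasDerivAt_id x).const_mul a).const_add 1
    have hlog : HasDerivAt (fun x => Real.log (1 + a*x)) (a / (1+a*x)) x :=
      hin.log (hpos x hx).ne'
    have hexp : HasDerivAt (fun x => Real.exp (-x/2)) (Real.exp (-x/2) * (-(1/2))) x :=
      (hd2 x).exp
    have := (hexp.mul hlog).neg
    refine this.congr_deriv ?_
    simp only [hf']
    field_simp
    ring
  have hcont : ContinuousWithinAt f (Ici 0) 0 := by
    apply ContinuousAt.continuousWithinAt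
    apply ContinuousAt.neg
    apply ContinuousAt.mul
    · exact (Continuous.continuousAt (by continuity))
    · exact (Real.continuousAt_log (by norm_num)).comp
        (Continuous.continuousAt (by continuity))
  have hint : IntegrableOn f' (Ioi 0) :=
    ((intOn_explog ha).const_mul (1/2)).sub (intOn_frac ha)
  have htend : Tendsto f atTop (nhds 0) := by
    rw [hf]
    have hb : ∀ᶠ x in atTop, -((4*a) * Real.exp (-x/4)) ≤ -(Real.exp (-x/2) * Real.log (1 + a*x))
        ∧ -(Real.exp (-x/2) * Real.log (1 + a*x)) ≤ (4*a) * Real.exp (-x/4) := by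
      filter_upwards [eventually_ge_atTop (0:ℝ)] with x hx0
      have h1 : 0 ≤ Real.exp (-x/2) * Real.log (1 + a*x) :=
        mul_nonneg (Real.exp_pos _).le (log_nonneg' ha hx0)
      have h2 : Real.exp (-x/2) * Real.log (1 + a*x) ≤ (4*a) * Real.exp (-x/4) := by
        calc Real.exp (-x/2) * Real.log (1 + a*x) ≤ Real.exp (-x/2) * (a*x) :=
              mul_le_mul_of_nonneg_left (log_le_lin ha hx0) (Real.exp_pos _).le
          _ = a * (x * Real.exp (-x/2)) := by ring
          _ ≤ a * (4 * Real.exp (-x/4)) := mul_le_mul_of_nonneg_left (xexp_bound hx0) ha.le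
          _ = (4*a) * Real.exp (-x/4) := by ring
      constructor <;> linarith [mul_pos (by positivity : (0:ℝ) < 4*a) (Real.exp_pos (-x/4))]
    have htz : Tendsto (fun x : ℝ => (4*a) * Real.exp (-x/4)) atTop (nhds 0) := by
      have t4 : Tendsto (fun x : ℝ => -x/4) atTop atBot := by
        have h : Tendsto (fun x : ℝ => -x) atTop atBot := tendsto_neg_atTop_atBot
        exact h.atBot_div_const (by norm_num)
      simpa using (Real.tendsto_exp_atBot.comp t4).const_mul (4*a)
    refine tendsto_of_tendsto_of_tendsto_of_le_of_le' (by simpa using htz.neg) htz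
      (hb.mono fun x h => h.1) (hb.mono fun x h => h.2)
  have hres := integral_Ioi_of_hasDerivAt_of_tendsto hcont hderiv hint htend
  have hf0 : f 0 = 0 := by simp [hf]
  rw [hf0, sub_zero] at hres
  have := integral_sub ((intOn_explog ha).const_mul (1/2)) (intOn_frac ha)
  rw [hf'] at hres
  -- hres : ∫ (A - B) = 0
  have h2 : (∫ x in Ioi (0:ℝ), (1/2) * (Real.exp (-x/2) * Real.log (1 + a*x)))
      - ∫ x in Ioi (0:ℝ), a * Real.exp (-x/2) / (1 + a*x) = 0 := by
    rw [← this]; exact hres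
  linarith [h2]

lemma shift_one (h : ℝ → ℝ) : ∫ t in Ioi (1:ℝ), h t = ∫ y in Ioi (0:ℝ), h (y + 1) := by
  have := (measurePreserving_add_right (volume : Measure ℝ) 1).setIntegral_preimage_emb
    (measurableEmbedding_addRight 1) h (Ioi 1)
  rw [← this]
  congr 1
  rw [preimage_add_const_Ioi]; norm_num

lemma subst_eq {a : ℝ} (ha : 0 < a) :
    ∫ x in Ioi (0:ℝ), a * Real.exp (-x/2) / (1 + a*x)
      = Real.exp (1/(2*a)) * ∫ t in Ioi (1:ℝ), t⁻¹ * Real.exp (-t/(2*a)) := by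
  set g : ℝ → ℝ := fun y => a * Real.exp (-y/(2*a)) / (1+y) with hg
  have stepA : ∫ x in Ioi (0:ℝ), a * Real.exp (-x/2) / (1 + a*x)
      = ∫ x in Ioi (0:ℝ), g (a*x) := by
    apply setIntegral_congr_fun measurableSet_Ioi
    intro x _
    simp only [hg]
    congr 2
    field_simp
  have stepB : ∫ x in Ioi (0:ℝ), g (a*x) = a⁻¹ • ∫ y in Ioi (0:ℝ), g y := by
    have := integral_comp_mul_left_Ioi g 0 ha
    rwa [mul_zero] at this
  have stepC : ∫ y in Ioi (0:ℝ), g y = a * ∫ y in Ioi (0:ℝ), Real.exp (-y/(2*a)) / (1+y) := by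
    rw [← integral_const_mul]
    apply setIntegral_congr_fun measurableSet_Ioi
    intro y _
    simp only [hg]; ring
  have stepD : ∫ t in Ioi (1:ℝ), t⁻¹ * Real.exp (-t/(2*a))
      = Real.exp (-(1/(2*a))) * ∫ y in Ioi (0:ℝ), Real.exp (-y/(2*a)) / (1+y) := by
    rw [shift_one (fun t => t⁻¹ * Real.exp (-t/(2*a))), ← integral_const_mul]
    apply setIntegral_congr_fun measurableSet_Ioi
    intro y hy
    have hy0 : (0:ℝ) < y := hy
    have h1 : Real.exp (-(y+1)/(2*a)) = Real.exp (-(1/(2*a))) * Real.exp (-y/(2*a)) := by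
      rw [← Real.exp_add]; congr 1; field_simp; ring
    show (y+1)⁻¹ * Real.exp (-(y+1)/(2*a)) = Real.exp (-(1/(2*a))) * (Real.exp (-y/(2*a)) / (1+y))
    rw [h1]
    field_simp
    ring
  rw [stepA, stepB, stepC, stepD, smul_eq_mul]
  rw [← mul_assoc, inv_mul_cancel₀ ha.ne', one_mul, ← mul_assoc, ← Real.exp_add]
  simp

/-- `C₁(x) = (1/ln 2) · e^{1/x} · ∫_1^∞ t⁻¹ e^{-t/x} dt`. -/
noncomputable def C1 (x : ℝ) : ℝ :=
  (1 / Real.log 2) * Real.exp (1 / x) * ∫ t in Set.Ioi (1:ℝ), t⁻¹ * Real.exp (-t / x)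

lemma intOn_explogb {a : ℝ} (ha : 0 < a) :
    IntegrableOn (fun x => Real.exp (-x/2) * Real.logb 2 (1 + a*x)) (Ioi 0) := by
  refine IntegrableOn.congr_fun (s := Ioi 0)
    ((intOn_explog ha).const_mul (Real.log 2)⁻¹) (fun x _ => ?_) measurableSet_Ioi
  rw [← Real.log_div_log]; ring

lemma keyB {a : ℝ} (ha : 0 < a) :
    ∫ x in Ioi (0:ℝ), Real.exp (-x/2) * Real.logb 2 (1 + a*x) = 2 * C1 (2*a) := by
  have h1 : (1/2 : ℝ) * ∫ x in Ioi (0:ℝ), Real.exp (-x/2) * Real.log (1 + a*x)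
      = Real.exp (1/(2*a)) * ∫ t in Ioi (1:ℝ), t⁻¹ * Real.exp (-t/(2*a)) := by
    rw [← integral_const_mul, ftc_eq ha, subst_eq ha]
  have h2 : ∫ x in Ioi (0:ℝ), Real.exp (-x/2) * Real.logb 2 (1 + a*x)
      = (Real.log 2)⁻¹ * ∫ x in Ioi (0:ℝ), Real.exp (-x/2) * Real.log (1 + a*x) := by
    rw [← integral_const_mul]
    apply setIntegral_congr_fun measurableSet_Ioi
    intro x _
    simp only [← Real.log_div_log]; ring
  rw [h2, C1]
  have h3 : ∫ t in Set.Ioi (1:ℝ), t⁻¹ * Real.exp (-t / (2*a))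
      = ∫ t in Ioi (1:ℝ), t⁻¹ * Real.exp (-t/(2*a)) := rfl
  rw [h3]
  linear_combination (2*(Real.log 2)⁻¹) * h1

lemma q_eq {L σ2 γ1 γ2 x : ℝ} (hL : 0 < L) (hσ : 0 < σ2) (hγ1 : 0 < γ1) (hγ2 : 0 < γ2)
    (hsum : γ1 + γ2 = 1) (hx : 0 ≤ x) :
    Real.logb 2 (1 + γ1*L*x/(γ2*L*x+2*σ2))
      = Real.logb 2 (1 + L/(2*σ2)*x) - Real.logb 2 (1 + γ2*L/(2*σ2)*x) := by
  have hD : (0:ℝ) < γ2*L*x+2*σ2 := by positivity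
  have h1 : (0:ℝ) < 1 + L/(2*σ2)*x := by positivity
  have h2 : (0:ℝ) < 1 + γ2*L/(2*σ2)*x := by positivity
  rw [← Real.logb_div h1.ne' h2.ne']
  congr 1
  have hγ : γ1 = 1 - γ2 := by linarith
  subst hγ
  field_simp
  ring

lemma nonneg_g {L σ2 γ1 γ2 x : ℝ} (hL : 0 < L) (hσ : 0 < σ2) (hγ1 : 0 < γ1) (hγ2 : 0 < γ2)
    (hx : 0 ≤ x) : 0 ≤ Real.logb 2 (1 + γ1*L*x/(γ2*L*x+2*σ2)) := by
  apply Real.logb_nonneg one_lt_two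
  have : 0 ≤ γ1*L*x/(γ2*L*x+2*σ2) := by positivity
  linarith

lemma Ig {L σ2 γ1 γ2 : ℝ} (hL : 0 < L) (hσ : 0 < σ2) (hγ1 : 0 < γ1) (hγ2 : 0 < γ2)
    (hsum : γ1 + γ2 = 1) :
    IntegrableOn (fun x => Real.exp (-x/2) * Real.logb 2 (1 + γ1*L*x/(γ2*L*x+2*σ2))) (Ioi 0) := by
  have hc : (0:ℝ) < L/(2*σ2) := by positivity
  have hd : (0:ℝ) < γ2*L/(2*σ2) := by positivity
  refine IntegrableOn.congr_fun (s := Ioi 0) ((intOn_explogb hc).sub (intOn_explogb hd))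
    (fun x hx => ?_) measurableSet_Ioi
  have hx0 : (0:ℝ) ≤ x := le_of_lt hx
  rw [q_eq hL hσ hγ1 hγ2 hsum hx0]
  simp only [Pi.sub_apply]
  ring

lemma keyC {L σ2 γ1 γ2 : ℝ} (hL : 0 < L) (hσ : 0 < σ2) (hγ1 : 0 < γ1) (hγ2 : 0 < γ2)
    (hsum : γ1 + γ2 = 1) :
    ∫ x in Ioi (0:ℝ), Real.exp (-x/2) * Real.logb 2 (1 + γ1*L*x/(γ2*L*x+2*σ2))
      = 2 * (C1 (L/σ2) - C1 (γ2*L/σ2)) := by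
  have hc : (0:ℝ) < L/(2*σ2) := by positivity
  have hd : (0:ℝ) < γ2*L/(2*σ2) := by positivity
  have h : ∫ x in Ioi (0:ℝ), Real.exp (-x/2) * Real.logb 2 (1 + γ1*L*x/(γ2*L*x+2*σ2))
      = ∫ x in Ioi (0:ℝ), (Real.exp (-x/2) * Real.logb 2 (1 + (L/(2*σ2))*x)
          - Real.exp (-x/2) * Real.logb 2 (1 + (γ2*L/(2*σ2))*x)) := by
    apply setIntegral_congr_fun measurableSet_Ioi
    intro x hx
    have hx0 : (0:ℝ) ≤ x := le_of_lt hx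
    simp only
    rw [q_eq hL hσ hγ1 hγ2 hsum hx0]
    ring
  rw [h, integral_sub (intOn_explogb hc) (intOn_explogb hd), keyB hc, keyB hd,
    show 2*(L/(2*σ2)) = L/σ2 by field_simp,
    show 2*(γ2*L/(2*σ2)) = γ2*L/σ2 by field_simp]
  ring

theorem stmt8 (L1 L2 σ2 γ1 γ2 : ℝ) (hL1 : 0 < L1) (hL2 : 0 < L2) (hσ : 0 < σ2)
    (hγ1 : γ1 ∈ Set.Ioo (0:ℝ) 1) (hγ2 : γ2 ∈ Set.Ioo (0:ℝ) 1) (hsum : γ1 + γ2 = 1) :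
    (∫ x1 in Set.Ioi (0:ℝ), ∫ x2 in Set.Ioi (0:ℝ),
      (1/4) * Real.exp (-x1/2) * Real.exp (-x2/2) *
        min (Real.logb 2 (1 + γ1 * L1 * x1 / (γ2 * L1 * x1 + 2 * σ2)))
            (Real.logb 2 (1 + γ1 * L2 * x2 / (γ2 * L2 * x2 + 2 * σ2))))
      ≤ min (C1 (L1 / σ2) - C1 (γ2 * L1 / σ2)) (C1 (L2 / σ2) - C1 (γ2 * L2 / σ2)) := by
  obtain ⟨hγ1a, hγ1b⟩ := hγ1
  obtain ⟨hγ2a, hγ2b⟩ := hγ2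
  have hnn1 : ∀ x : ℝ, 0 ≤ x → 0 ≤ Real.logb 2 (1 + γ1 * L1 * x / (γ2 * L1 * x + 2 * σ2)) :=
    fun x hx => nonneg_g hL1 hσ hγ1a hγ2a hx
  have hnn2 : ∀ x : ℝ, 0 ≤ x → 0 ≤ Real.logb 2 (1 + γ1 * L2 * x / (γ2 * L2 * x + 2 * σ2)) :=
    fun x hx => nonneg_g hL2 hσ hγ1a hγ2a hx
  -- nonnegativity of the inner integral
  have hfnn : 0 ≤ᵐ[volume.restrict (Ioi (0:ℝ))] fun x1 => ∫ x2 in Set.Ioi (0:ℝ),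
      (1/4) * Real.exp (-x1/2) * Real.exp (-x2/2) *
        min (Real.logb 2 (1 + γ1 * L1 * x1 / (γ2 * L1 * x1 + 2 * σ2)))
            (Real.logb 2 (1 + γ1 * L2 * x2 / (γ2 * L2 * x2 + 2 * σ2))) := by
    filter_upwards [ae_restrict_mem measurableSet_Ioi] with x1 hx1
    apply setIntegral_nonneg measurableSet_Ioi
    intro x2 hx2
    apply mul_nonneg (by positivity)
    exact le_min (hnn1 x1 (le_of_lt hx1)) (hnn2 x2 (le_of_lt hx2))
  refine le_min ?_ ?_
  · -- bound by first component
    have hstep : (∫ x1 in Set.Ioi (0:ℝ), ∫ x2 in Set.Ioi (0:ℝ),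
        (1/4) * Real.exp (-x1/2) * Real.exp (-x2/2) *
          min (Real.logb 2 (1 + γ1 * L1 * x1 / (γ2 * L1 * x1 + 2 * σ2)))
              (Real.logb 2 (1 + γ1 * L2 * x2 / (γ2 * L2 * x2 + 2 * σ2))))
        ≤ ∫ x1 in Set.Ioi (0:ℝ),
            (1/2) * (Real.exp (-x1/2) * Real.logb 2 (1 + γ1*L1*x1/(γ2*L1*x1+2*σ2))) := by
      apply integral_mono_of_nonneg hfnn ((Ig hL1 hσ hγ1a hγ2a hsum).const_mul (1/2))
      filter_upwards [ae_restrict_mem measurableSet_Ioi] with x1 hx1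
      have hx10 : (0:ℝ) ≤ x1 := le_of_lt hx1
      calc (∫ x2 in Set.Ioi (0:ℝ),
            (1/4) * Real.exp (-x1/2) * Real.exp (-x2/2) *
              min (Real.logb 2 (1 + γ1 * L1 * x1 / (γ2 * L1 * x1 + 2 * σ2)))
                  (Real.logb 2 (1 + γ1 * L2 * x2 / (γ2 * L2 * x2 + 2 * σ2))))
          ≤ ∫ x2 in Set.Ioi (0:ℝ),
              ((1/4) * Real.exp (-x1/2) * Real.logb 2 (1 + γ1*L1*x1/(γ2*L1*x1+2*σ2)))
                * Real.exp (-x2/2) := by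
            apply integral_mono_of_nonneg
            · filter_upwards [ae_restrict_mem measurableSet_Ioi] with x2 hx2
              apply mul_nonneg (by positivity)
              exact le_min (hnn1 x1 hx10) (hnn2 x2 (le_of_lt hx2))
            · exact (expint' 2 two_pos 0).const_mul _
            · filter_upwards [ae_restrict_mem measurableSet_Ioi] with x2 hx2
              have hmin := min_le_left
                (Real.logb 2 (1 + γ1 * L1 * x1 / (γ2 * L1 * x1 + 2 * σ2)))
                (Real.logb 2 (1 + γ1 * L2 * x2 / (γ2 * L2 * x2 + 2 * σ2)))
              have hw : (0:ℝ) ≤ (1/4) * Real.exp (-x1/2) * Real.exp (-x2/2) := by positivity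
              nlinarith [mul_le_mul_of_nonneg_left hmin hw]
        _ = (1/2) * (Real.exp (-x1/2) * Real.logb 2 (1 + γ1*L1*x1/(γ2*L1*x1+2*σ2))) := by
            rw [integral_const_mul, intexp]; ring
    calc _ ≤ _ := hstep
      _ = C1 (L1 / σ2) - C1 (γ2 * L1 / σ2) := by
          rw [integral_const_mul, keyC hL1 hσ hγ1a hγ2a hsum]; ring
  · -- bound by second component
    have hK := keyC hL2 hσ hγ1a hγ2a hsum
    have hstep : (∫ x1 in Set.Ioi (0:ℝ), ∫ x2 in Set.Ioi (0:ℝ),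
        (1/4) * Real.exp (-x1/2) * Real.exp (-x2/2) *
          min (Real.logb 2 (1 + γ1 * L1 * x1 / (γ2 * L1 * x1 + 2 * σ2)))
              (Real.logb 2 (1 + γ1 * L2 * x2 / (γ2 * L2 * x2 + 2 * σ2))))
        ≤ ∫ x1 in Set.Ioi (0:ℝ),
            ((1/4) * ∫ x2 in Set.Ioi (0:ℝ),
              Real.exp (-x2/2) * Real.logb 2 (1 + γ1*L2*x2/(γ2*L2*x2+2*σ2)))
              * Real.exp (-x1/2) := by
      apply integral_mono_of_nonneg hfnn ((expint' 2 two_pos 0).const_mul _)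
      filter_upwards [ae_restrict_mem measurableSet_Ioi] with x1 hx1
      have hx10 : (0:ℝ) ≤ x1 := le_of_lt hx1
      calc (∫ x2 in Set.Ioi (0:ℝ),
            (1/4) * Real.exp (-x1/2) * Real.exp (-x2/2) *
              min (Real.logb 2 (1 + γ1 * L1 * x1 / (γ2 * L1 * x1 + 2 * σ2)))
                  (Real.logb 2 (1 + γ1 * L2 * x2 / (γ2 * L2 * x2 + 2 * σ2))))
          ≤ ∫ x2 in Set.Ioi (0:ℝ),
              ((1/4) * Real.exp (-x1/2))
                * (Real.exp (-x2/2) * Real.logb 2 (1 + γ1*L2*x2/(γ2*L2*x2+2*σ2))) := by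
            apply integral_mono_of_nonneg
            · filter_upwards [ae_restrict_mem measurableSet_Ioi] with x2 hx2
              apply mul_nonneg (by positivity)
              exact le_min (hnn1 x1 hx10) (hnn2 x2 (le_of_lt hx2))
            · exact (Ig hL2 hσ hγ1a hγ2a hsum).const_mul _
            · filter_upwards [ae_restrict_mem measurableSet_Ioi] with x2 hx2
              have hmin := min_le_right
                (Real.logb 2 (1 + γ1 * L1 * x1 / (γ2 * L1 * x1 + 2 * σ2)))
                (Real.logb 2 (1 + γ1 * L2 * x2 / (γ2 * L2 * x2 + 2 * σ2)))
              have hw : (0:ℝ) ≤ (1/4) * Real.exp (-x1/2) * Real.exp (-x2/2) := by positivity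
              nlinarith [mul_le_mul_of_nonneg_left hmin hw]
        _ = ((1/4) * ∫ x2 in Set.Ioi (0:ℝ),
              Real.exp (-x2/2) * Real.logb 2 (1 + γ1*L2*x2/(γ2*L2*x2+2*σ2)))
              * Real.exp (-x1/2) := by
            rw [integral_const_mul]; ring
    calc _ ≤ _ := hstep
      _ = C1 (L2 / σ2) - C1 (γ2 * L2 / σ2) := by
          rw [integral_const_mul, intexp, hK]; ring
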